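/- Let p ∈ [1,∞), let ρ : ℝ^N → ℝ be continuous and strictly positive with ∫_{ℝ^N} ρ(x) dx = 1, suppose K > 0 satisfies sup{ρ(x) : |x−y| ≤ 1} ≤ K ρ(y) for every y ∈ ℝ^N, and let β > 0. Let J be nonnegative, measurable, supported in the closed unit ball with ∫ J = 1; let g : ℝ → ℝ be globally Lipschitz with constant ℓ_g and g(0) = 0; let h : ℝ×ℝ → ℝ satisfy h(t,0) = 0 and |h(t,s₁) − h(t,s₂)| ≤ ℓ_h|s₁ − s₂| for all t,s₁,s₂. Then for each t ∈ ℝ the map f(t,u) := −u + g(β(J*u) + β h(t,u∘)) (where h(t,u) denotes the pointwise composition x ↦ h(t,u(x))) maps L^p(ℝ^N,ρ) into itself and satisfies ‖f(t,u) − f(t,v)‖_{L^p(ℝ^N,ρ)} ≤ (1 + ℓ_g β K^{1/p} + ℓ_g β ℓ_h) ‖u − v‖_{L^p(ℝ^N,ρ)} for all u, v ∈ L^p(ℝ^N,ρ). -/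

import Mathlib

open MeasureTheory Set
open scoped ENNReal

noncomputable section

abbrev Euc (N : ℕ) := EuclideanSpace ℝ (Fin N)

/-- Weighted `L^p` norm `(∫ ρ |u|^p)^{1/p}`. -/
def wnorm {N : ℕ} (p : ℝ) (ρ u : Euc N → ℝ) : ℝ :=
  (∫ x, ρ x * |u x| ^ p) ^ (1 / p)

/-- Convolution `(J*u)(x) = ∫ J(x-y) u(y) dy`. -/
def conv {N : ℕ} (J u : Euc N → ℝ) (x : Euc N) : ℝ :=
  ∫ y, J (x - y) * u y

/-- Membership in the weighted Lebesgue space `L^p(ℝ^N, ρ)`. -/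
def MemWLp {N : ℕ} (p : ℝ) (ρ u : Euc N → ℝ) : Prop :=
  AEStronglyMeasurable u volume ∧ Integrable fun x => ρ x * |u x| ^ p

theorem lint_sub_left {N : ℕ} (f : Euc N → ℝ≥0∞) (x : Euc N) :
    ∫⁻ y, f (x - y) = ∫⁻ y, f y := by
  have hn : ∫⁻ y, f (x + (-y)) ∂volume = ∫⁻ z, f (x + z) ∂volume := by
    have := (Measure.measurePreserving_neg (volume : Measure (Euc N))).lintegral_comp_emb
      (MeasurableEquiv.neg (Euc N)).measurableEmbedding (fun z => f (x + z))
    simpa using this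
  simp_rw [sub_eq_add_neg]
  rw [hn, lintegral_add_left_eq_self f x]

theorem ofReal_int_le_lint {N : ℕ} (g : Euc N → ℝ) (hg : 0 ≤ g) :
    ENNReal.ofReal (∫ y, g y) ≤ ∫⁻ y, ENNReal.ofReal (g y) := by
  by_cases hgi : Integrable g volume
  · rw [ofReal_integral_eq_lintegral_ofReal hgi (Filter.Eventually.of_forall hg)]
  · rw [integral_undef hgi]; simp

theorem pt_holder {N : ℕ} (p : ℝ) (hp : 1 ≤ p) (J : Euc N → ℝ) (hJnn : ∀ x, 0 ≤ J x)
    (hJm : Measurable J) (hJint1 : ∀ x : Euc N, ∫⁻ y, ENNReal.ofReal (J (x - y)) = 1)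
    (w : Euc N → ℝ) (hw : AEMeasurable w volume) (x : Euc N) :
    ENNReal.ofReal |∫ y, J (x - y) * w y| ≤
      (∫⁻ y, ENNReal.ofReal (J (x - y)) * (ENNReal.ofReal |w y|) ^ p) ^ (1 / p) := by
  have hp0 : 0 < p := lt_of_lt_of_le one_pos hp
  have hJxm : Measurable (fun y : Euc N => J (x - y)) :=
    hJm.comp (measurable_const.sub measurable_id)
  have step1 : ENNReal.ofReal |∫ y, J (x - y) * w y| ≤
      ∫⁻ y, ENNReal.ofReal (J (x - y)) * ENNReal.ofReal |w y| := by
    calc ENNReal.ofReal |∫ y, J (x - y) * w y|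
        ≤ ENNReal.ofReal (∫ y, |J (x - y) * w y|) :=
          ENNReal.ofReal_le_ofReal (by
            simpa only [Real.norm_eq_abs] using
              norm_integral_le_integral_norm (μ := volume) (fun y => J (x - y) * w y))
      _ ≤ ∫⁻ y, ENNReal.ofReal |J (x - y) * w y| :=
          ofReal_int_le_lint _ (fun y => abs_nonneg _)
      _ = ∫⁻ y, ENNReal.ofReal (J (x - y)) * ENNReal.ofReal |w y| := by
          congr 1; funext y
          rw [abs_mul, abs_of_nonneg (hJnn _), ENNReal.ofReal_mul (hJnn _)]
  rcases eq_or_lt_of_le hp with hp1 | hp1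
  · refine step1.trans ?_
    rw [← hp1]
    simp
  · set q := Real.conjExponent p with hq
    have hpq : p.HolderConjugate q := Real.HolderConjugate.conjExponent hp1
    have hqp : q.HolderConjugate p := hpq.symm
    set a : Euc N → ℝ≥0∞ := fun y => ENNReal.ofReal (J (x - y)) with ha
    set b : Euc N → ℝ≥0∞ := fun y => ENNReal.ofReal |w y| with hb
    have ham : Measurable a := hJxm.ennreal_ofReal
    have hbm : AEMeasurable b volume := (continuous_abs.measurable.comp_aemeasurable hw).ennreal_ofReal
    have key := ENNReal.lintegral_mul_le_Lp_mul_Lq (volume : Measure (Euc N)) hqp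
      ((ham.aemeasurable).pow_const (1/q)) (((ham.aemeasurable).pow_const (1/p)).mul hbm)
    have hfg : (fun y => (a y) ^ (1/q) * ((a y) ^ (1/p) * b y)) = fun y => a y * b y := by
      funext y
      rw [← mul_assoc, ← ENNReal.rpow_add_of_nonneg _ _ hqp.one_div_nonneg hpq.one_div_nonneg,
        one_div, one_div, hqp.inv_add_inv_eq_one, ENNReal.rpow_one]
    have hfq : ∫⁻ y, ((a y) ^ (1/q)) ^ q = (1 : ℝ≥0∞) := by
      rw [← hJint1 x]
      congr 1; funext y
      rw [← ENNReal.rpow_mul, one_div_mul_cancel hqp.ne_zero, ENNReal.rpow_one]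
    have hgp : (fun y => ((a y) ^ (1/p) * b y) ^ p) = fun y => a y * (b y) ^ p := by
      funext y
      rw [ENNReal.mul_rpow_of_nonneg _ _ hp0.le, ← ENNReal.rpow_mul,
        one_div_mul_cancel hp0.ne', ENNReal.rpow_one]
    simp only [Pi.mul_apply] at key
    rw [hfg, hfq, hgp] at key
    refine step1.trans ?_
    simpa using key

theorem pt_bound {N : ℕ} (p : ℝ) (hp : 1 ≤ p) (J : Euc N → ℝ) (hJnn : ∀ x, 0 ≤ J x)
    (hJm : Measurable J) (hJint1 : ∀ x : Euc N, ∫⁻ y, ENNReal.ofReal (J (x - y)) = 1)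
    (u v : Euc N → ℝ) (hu : AEMeasurable u volume) (hv : AEMeasurable v volume) (x : Euc N) :
    ENNReal.ofReal |conv J u x - conv J v x| ≤
      (∫⁻ y, ENNReal.ofReal (J (x - y)) * (ENNReal.ofReal |u y - v y|) ^ p) ^ (1 / p) := by
  have hp0 : 0 < p := lt_of_lt_of_le one_pos hp
  have hJxm : Measurable (fun y : Euc N => J (x - y)) :=
    hJm.comp (measurable_const.sub measurable_id)
  set R := ∫⁻ y, ENNReal.ofReal (J (x - y)) * (ENNReal.ofReal |u y - v y|) ^ p with hR
  by_cases hRtop : R = ∞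
  · rw [hRtop, ENNReal.top_rpow_of_pos (by positivity)]
    exact le_top
  · -- R < ∞ : the difference J(x-·)(u-v) is integrable
    have hwm : AEMeasurable (fun y => u y - v y) volume := hu.sub hv
    have hintw : Integrable (fun y => J (x - y) * (u y - v y)) volume := by
      refine ⟨((hJxm.aemeasurable.mul hwm).aestronglyMeasurable), ?_⟩
      rw [hasFiniteIntegral_def]
      have hptw : ∀ y, ‖J (x - y) * (u y - v y)‖ₑ ≤
          ENNReal.ofReal (J (x - y)) * (1 + (ENNReal.ofReal |u y - v y|) ^ p) := by
        intro y
        rw [← ofReal_norm_eq_enorm, Real.norm_eq_abs, abs_mul,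
          abs_of_nonneg (hJnn _), ENNReal.ofReal_mul (hJnn _)]
        refine mul_le_mul_right ?_ _
        set c := ENNReal.ofReal |u y - v y| with hc
        by_cases hc1 : c ≤ 1
        · exact hc1.trans le_self_add
        · have : c = c ^ (1:ℝ) := (ENNReal.rpow_one c).symm
          calc c = c ^ (1:ℝ) := this
            _ ≤ c ^ p := ENNReal.rpow_le_rpow_of_exponent_le (le_of_not_ge hc1) hp
            _ ≤ 1 + c ^ p := le_add_self
      calc ∫⁻ y, ‖J (x - y) * (u y - v y)‖ₑ
          ≤ ∫⁻ y, ENNReal.ofReal (J (x - y)) * (1 + (ENNReal.ofReal |u y - v y|) ^ p) :=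
            lintegral_mono hptw
        _ = (∫⁻ y, ENNReal.ofReal (J (x - y))) + R := by
            rw [hR, ← lintegral_add_left' (hJxm.ennreal_ofReal.aemeasurable)]
            congr 1; funext y; ring
        _ < ∞ := by
            rw [hJint1 x]
            exact ENNReal.add_lt_top.2 ⟨ENNReal.one_lt_top, lt_top_iff_ne_top.2 hRtop⟩
    by_cases hu1 : Integrable (fun y => J (x - y) * u y) volume
    · have hv1 : Integrable (fun y => J (x - y) * v y) volume := by
        have h2 := hu1.sub hintw
        have : (fun y => J (x - y) * u y) - (fun y => J (x - y) * (u y - v y)) =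
            fun y => J (x - y) * v y := by funext y; simp; ring
        rwa [this] at h2
      have hsub : conv J u x - conv J v x = ∫ y, J (x - y) * (u y - v y) := by
        rw [conv, conv, ← integral_sub hu1 hv1]
        congr 1; funext y; ring
      rw [hsub]
      exact pt_holder p hp J hJnn hJm hJint1 _ hwm x
    · have hv1 : ¬ Integrable (fun y => J (x - y) * v y) volume := by
        intro hv1
        apply hu1
        have h2 := hv1.add hintw
        have : (fun y => J (x - y) * v y) + (fun y => J (x - y) * (u y - v y)) =
            fun y => J (x - y) * u y := by funext y; simp; ring
        rwa [this] at h2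
      rw [conv, conv, integral_undef hu1, integral_undef hv1]
      simp

theorem lint_bound {N : ℕ} (p : ℝ) (hp : 1 ≤ p)
    (ρ : Euc N → ℝ) (hρm : Measurable ρ) (hρnn : ∀ x, 0 ≤ ρ x)
    (K : ℝ) (hK : 0 < K) (hKρ : ∀ y x : Euc N, ‖x - y‖ ≤ 1 → ρ x ≤ K * ρ y)
    (J : Euc N → ℝ) (hJnn : ∀ x, 0 ≤ J x) (hJm : Measurable J)
    (hJsupp : ∀ x : Euc N, 1 < ‖x‖ → J x = 0)
    (hJint : ∫⁻ z, ENNReal.ofReal (J z) = 1)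
    (u v : Euc N → ℝ) (hu : AEMeasurable u volume) (hv : AEMeasurable v volume) :
    ∫⁻ x, ENNReal.ofReal (ρ x) * (ENNReal.ofReal |conv J u x - conv J v x|) ^ p ≤
      ENNReal.ofReal K * ∫⁻ y, ENNReal.ofReal (ρ y) * (ENNReal.ofReal |u y - v y|) ^ p := by
  have hp0 : 0 < p := lt_of_lt_of_le one_pos hp
  have hJint1 : ∀ x : Euc N, ∫⁻ y, ENNReal.ofReal (J (x - y)) = 1 := by
    intro x
    rw [lint_sub_left (fun z => ENNReal.ofReal (J z)) x]; exact hJint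
  have hJint2 : ∀ y : Euc N, ∫⁻ x, ENNReal.ofReal (J (x - y)) = 1 := by
    intro y
    rw [lintegral_sub_right_eq_self (fun z => ENNReal.ofReal (J z)) y]; exact hJint
  set c : Euc N → ℝ≥0∞ := fun y => (ENNReal.ofReal |u y - v y|) ^ p with hc
  have hcm : AEMeasurable c volume :=
    ((continuous_abs.measurable.comp_aemeasurable (hu.sub hv)).ennreal_ofReal).pow_const p
  have hcne : ∀ y, c y ≠ ∞ := fun y =>
    ENNReal.rpow_ne_top_of_nonneg hp0.le ENNReal.ofReal_ne_top
  calc ∫⁻ x, ENNReal.ofReal (ρ x) * (ENNReal.ofReal |conv J u x - conv J v x|) ^ p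
      ≤ ∫⁻ x, ENNReal.ofReal (ρ x) * ∫⁻ y, ENNReal.ofReal (J (x - y)) * c y := by
        refine lintegral_mono (fun x => mul_le_mul_right ?_ _)
        have hb := pt_bound p hp J hJnn hJm hJint1 u v hu hv x
        calc (ENNReal.ofReal |conv J u x - conv J v x|) ^ p
            ≤ ((∫⁻ y, ENNReal.ofReal (J (x - y)) * c y) ^ (1/p)) ^ p :=
              ENNReal.rpow_le_rpow hb hp0.le
          _ = ∫⁻ y, ENNReal.ofReal (J (x - y)) * c y := by
              rw [← ENNReal.rpow_mul, one_div_mul_cancel hp0.ne', ENNReal.rpow_one]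
    _ = ∫⁻ x, ∫⁻ y, ENNReal.ofReal (ρ x) * (ENNReal.ofReal (J (x - y)) * c y) := by
        congr 1; funext x
        rw [lintegral_const_mul' _ _ ENNReal.ofReal_ne_top]
    _ = ∫⁻ y, ∫⁻ x, ENNReal.ofReal (ρ x) * (ENNReal.ofReal (J (x - y)) * c y) := by
        apply lintegral_lintegral_swap
        apply AEMeasurable.mul
        · exact (hρm.comp measurable_fst).ennreal_ofReal.aemeasurable
        · apply AEMeasurable.mul
          · exact ((hJm.comp (measurable_fst.sub measurable_snd)).ennreal_ofReal).aemeasurable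
          · exact hcm.comp_quasiMeasurePreserving Measure.quasiMeasurePreserving_snd
    _ ≤ ∫⁻ y, ENNReal.ofReal K * (ENNReal.ofReal (ρ y) * c y) := by
        refine lintegral_mono (fun y => ?_)
        calc ∫⁻ x, ENNReal.ofReal (ρ x) * (ENNReal.ofReal (J (x - y)) * c y)
            = (∫⁻ x, ENNReal.ofReal (ρ x) * ENNReal.ofReal (J (x - y))) * c y := by
              rw [← lintegral_mul_const' _ _ (hcne y)]
              congr 1; funext x; ring
          _ ≤ (∫⁻ x, ENNReal.ofReal (K * ρ y) * ENNReal.ofReal (J (x - y))) * c y := by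
              refine mul_le_mul_left (lintegral_mono fun x => ?_) _
              by_cases hxy : ‖x - y‖ ≤ 1
              · exact mul_le_mul_left (ENNReal.ofReal_le_ofReal (hKρ y x hxy)) _
              · rw [hJsupp _ (lt_of_not_ge hxy)]
                simp
          _ = ENNReal.ofReal K * (ENNReal.ofReal (ρ y) * c y) := by
              rw [lintegral_const_mul' _ _ ENNReal.ofReal_ne_top, hJint2 y,
                ENNReal.ofReal_mul hK.le]
              ring
    _ = ENNReal.ofReal K * ∫⁻ y, ENNReal.ofReal (ρ y) * c y := by
        rw [lintegral_const_mul' _ _ ENNReal.ofReal_ne_top]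

theorem eLpNorm_wd {N : ℕ} (p : ℝ) (hp : 1 ≤ p) (ρ : Euc N → ℝ) (hρm : Measurable ρ)
    (f : Euc N → ℝ) (hf : AEStronglyMeasurable f volume) :
    eLpNorm f (ENNReal.ofReal p) (volume.withDensity (fun x => ENNReal.ofReal (ρ x))) =
      (∫⁻ x, ENNReal.ofReal (ρ x) * (ENNReal.ofReal |f x|) ^ p) ^ (1 / p) := by
  have hp0 : 0 < p := lt_of_lt_of_le one_pos hp
  rw [eLpNorm_eq_lintegral_rpow_enorm_toReal
    (by simp only [ne_eq, ENNReal.ofReal_eq_zero, not_le]; linarith)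
    ENNReal.ofReal_ne_top, ENNReal.toReal_ofReal hp0.le]
  congr 1
  rw [lintegral_withDensity_eq_lintegral_mul₀' (hρm.ennreal_ofReal.aemeasurable)
    (((hf.mono_ac (withDensity_absolutelyContinuous volume
      (fun x => ENNReal.ofReal (ρ x)))).enorm).pow_const p)]
  congr 1; funext x
  simp only [Pi.mul_apply]
  rw [← ofReal_norm_eq_enorm, Real.norm_eq_abs]

theorem conv_aesm {N : ℕ} (J : Euc N → ℝ) (hJm : Measurable J) (u : Euc N → ℝ)
    (hu : AEMeasurable u volume) : AEStronglyMeasurable (conv J u) volume := by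
  have h1 : AEStronglyMeasurable (fun z : Euc N × Euc N => J (z.1 - z.2) * u z.2)
      ((volume : Measure (Euc N)).prod (volume : Measure (Euc N))) :=
    ((hJm.comp (measurable_fst.sub measurable_snd)).aemeasurable.mul
      (hu.comp_quasiMeasurePreserving Measure.quasiMeasurePreserving_snd)).aestronglyMeasurable
  exact h1.integral_prod_right'

theorem memWLp_iff {N : ℕ} (p : ℝ) (hp : 1 ≤ p) (ρ : Euc N → ℝ) (hρc : Continuous ρ)
    (hρnn : ∀ x, 0 ≤ ρ x) (f : Euc N → ℝ) (hf : AEStronglyMeasurable f volume) :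
    MemWLp p ρ f ↔ (∫⁻ x, ENNReal.ofReal (ρ x) * (ENNReal.ofReal |f x|) ^ p) < ∞ := by
  have hp0 : 0 < p := lt_of_lt_of_le one_pos hp
  have habsp : Continuous (fun s : ℝ => |s| ^ p) :=
    Continuous.rpow_const continuous_abs (fun s => Or.inr hp0.le)
  have key : ∀ x, ‖ρ x * |f x| ^ p‖ₑ =
      ENNReal.ofReal (ρ x) * (ENNReal.ofReal |f x|) ^ p := fun x => by
    rw [← ofReal_norm_eq_enorm, Real.norm_eq_abs,
      abs_of_nonneg (mul_nonneg (hρnn x) (Real.rpow_nonneg (abs_nonneg _) p)),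
      ENNReal.ofReal_mul (hρnn x), ENNReal.ofReal_rpow_of_nonneg (abs_nonneg _) hp0.le]
  constructor
  · rintro ⟨-, hint⟩
    have h2 := hint.hasFiniteIntegral
    rw [hasFiniteIntegral_def] at h2
    simp_rw [key] at h2
    exact h2
  · intro hfin
    refine ⟨hf, ⟨(hρc.aestronglyMeasurable).mul (habsp.comp_aestronglyMeasurable hf), ?_⟩⟩
    rw [hasFiniteIntegral_def]
    simp_rw [key]
    exact hfin

theorem wnorm_eq {N : ℕ} (p : ℝ) (hp : 1 ≤ p) (ρ : Euc N → ℝ) (hρc : Continuous ρ)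
    (hρnn : ∀ x, 0 ≤ ρ x) (f : Euc N → ℝ) (hf : AEStronglyMeasurable f volume) :
    wnorm p ρ f = ((∫⁻ x, ENNReal.ofReal (ρ x) * (ENNReal.ofReal |f x|) ^ p) ^ (1/p)).toReal := by
  have hp0 : 0 < p := lt_of_lt_of_le one_pos hp
  have habsp : Continuous (fun s : ℝ => |s| ^ p) :=
    Continuous.rpow_const continuous_abs (fun s => Or.inr hp0.le)
  rw [wnorm, integral_eq_lintegral_of_nonneg_ae
    (Filter.Eventually.of_forall fun x => mul_nonneg (hρnn x) (Real.rpow_nonneg (abs_nonneg _) _))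
    ((hρc.aestronglyMeasurable).mul (habsp.comp_aestronglyMeasurable hf))]
  rw [← ENNReal.toReal_rpow]
  congr 2
  apply lintegral_congr fun x => ?_
  rw [ENNReal.ofReal_mul (hρnn x), ENNReal.ofReal_rpow_of_nonneg (abs_nonneg _) hp0.le]

theorem stmt4 {N : ℕ} (p : ℝ) (hp : 1 ≤ p)
    (ρ : Euc N → ℝ) (hρc : Continuous ρ) (hρpos : ∀ x, 0 < ρ x) (hρ1 : ∫ x, ρ x = 1)
    (K : ℝ) (hK : 0 < K) (hKρ : ∀ y x : Euc N, ‖x - y‖ ≤ 1 → ρ x ≤ K * ρ y)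
    (β : ℝ) (hβ : 0 < β)
    (J : Euc N → ℝ) (hJnn : ∀ x, 0 ≤ J x) (hJm : Measurable J)
    (hJsupp : ∀ x : Euc N, 1 < ‖x‖ → J x = 0) (hJ1 : ∫ x, J x = 1)
    (g : ℝ → ℝ) (ℓg : ℝ) (hgLip : ∀ s₁ s₂, |g s₁ - g s₂| ≤ ℓg * |s₁ - s₂|) (hg0 : g 0 = 0)
    (h : ℝ → ℝ → ℝ) (ℓh : ℝ) (hh0 : ∀ t, h t 0 = 0)
    (hhLip : ∀ t s₁ s₂, |h t s₁ - h t s₂| ≤ ℓh * |s₁ - s₂|)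
    (t : ℝ)
    (u v : Euc N → ℝ) (huM : MemWLp p ρ u) (hvM : MemWLp p ρ v) :
    MemWLp p ρ (fun x => -u x + g (β * conv J u x + β * h t (u x))) ∧
    wnorm p ρ (fun x =>
        (-u x + g (β * conv J u x + β * h t (u x))) -
        (-v x + g (β * conv J v x + β * h t (v x)))) ≤
      (1 + ℓg * β * K ^ (1 / p) + ℓg * β * ℓh) * wnorm p ρ (fun x => u x - v x) := by
  have hp0 : 0 < p := lt_of_lt_of_le one_pos hp
  have hρm : Measurable ρ := hρc.measurable
  have hρnn : ∀ x, 0 ≤ ρ x := fun x => (hρpos x).le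
  have hℓg : 0 ≤ ℓg := by
    have h1 := hgLip 1 0
    rw [sub_zero, abs_one, mul_one] at h1
    exact le_trans (abs_nonneg _) h1
  have hℓh : 0 ≤ ℓh := by
    have h1 := hhLip t 1 0
    rw [sub_zero, abs_one, mul_one] at h1
    exact le_trans (abs_nonneg _) h1
  have hJI : Integrable J volume := by
    by_contra hni; rw [integral_undef hni] at hJ1; norm_num at hJ1
  have hJint : ∫⁻ z, ENNReal.ofReal (J z) = 1 := by
    rw [← ofReal_integral_eq_lintegral_ofReal hJI (Filter.Eventually.of_forall hJnn), hJ1,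
      ENNReal.ofReal_one]
  set μ : Measure (Euc N) := volume.withDensity (fun x => ENNReal.ofReal (ρ x)) with hμ
  set pE : ℝ≥0∞ := ENNReal.ofReal p with hpE
  have hpE1 : 1 ≤ pE := ENNReal.one_le_ofReal.2 hp
  have hAC : μ ≪ (volume : Measure (Euc N)) := withDensity_absolutelyContinuous volume _
  have hu : AEStronglyMeasurable u volume := huM.1
  have hv : AEStronglyMeasurable v volume := hvM.1
  have hgc : Continuous g := by
    have hlip : LipschitzWith (Real.toNNReal ℓg) g := by
      apply LipschitzWith.of_dist_le_mul
      intro a b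
      rw [Real.dist_eq, Real.dist_eq]
      exact (hgLip a b).trans (mul_le_mul_of_nonneg_right (Real.le_coe_toNNReal ℓg) (abs_nonneg _))
    exact hlip.continuous
  have hhc : Continuous (h t) := by
    have hlip : LipschitzWith (Real.toNNReal ℓh) (h t) := by
      apply LipschitzWith.of_dist_le_mul
      intro a b
      rw [Real.dist_eq, Real.dist_eq]
      exact (hhLip t a b).trans
        (mul_le_mul_of_nonneg_right (Real.le_coe_toNNReal ℓh) (abs_nonneg _))
    exact hlip.continuous
  have hcu : AEStronglyMeasurable (conv J u) volume := conv_aesm J hJm u hu.aemeasurable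
  have hcv : AEStronglyMeasurable (conv J v) volume := conv_aesm J hJm v hv.aemeasurable
  have hFm : ∀ (w : Euc N → ℝ), AEStronglyMeasurable w volume →
      AEStronglyMeasurable (fun x => -w x + g (β * conv J w x + β * h t (w x))) volume :=
    fun w hw => (hw.neg).add (hgc.comp_aestronglyMeasurable
      ((aestronglyMeasurable_const.mul (conv_aesm J hJm w hw.aemeasurable)).add
        (aestronglyMeasurable_const.mul (hhc.comp_aestronglyMeasurable hw))))
  have hFu := hFm u hu
  have hFv := hFm v hv
  have ewd : ∀ (f : Euc N → ℝ), AEStronglyMeasurable f volume →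
      eLpNorm f pE μ = (∫⁻ x, ENNReal.ofReal (ρ x) * (ENNReal.ofReal |f x|) ^ p) ^ (1/p) :=
    fun f hf => eLpNorm_wd p hp ρ hρm f hf
  have hufin : eLpNorm u pE μ < ∞ := by
    rw [ewd u hu]
    exact ENNReal.rpow_lt_top_of_nonneg (by positivity)
      (((memWLp_iff p hp ρ hρc hρnn u hu).1 huM).ne)
  have hvfin : eLpNorm v pE μ < ∞ := by
    rw [ewd v hv]
    exact ENNReal.rpow_lt_top_of_nonneg (by positivity)
      (((memWLp_iff p hp ρ hρc hρnn v hv).1 hvM).ne)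
  have bD : ∀ (w₁ w₂ : Euc N → ℝ), AEStronglyMeasurable w₁ volume →
      AEStronglyMeasurable w₂ volume →
      eLpNorm (fun x => conv J w₁ x - conv J w₂ x) pE μ ≤
        ENNReal.ofReal (K ^ (1/p)) * eLpNorm (fun x => w₁ x - w₂ x) pE μ := by
    intro w₁ w₂ hw₁ hw₂
    rw [ewd (fun x => conv J w₁ x - conv J w₂ x)
        ((conv_aesm J hJm w₁ hw₁.aemeasurable).sub (conv_aesm J hJm w₂ hw₂.aemeasurable)),
      ewd (fun x => w₁ x - w₂ x) (hw₁.sub hw₂)]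
    calc (∫⁻ x, ENNReal.ofReal (ρ x) * (ENNReal.ofReal |conv J w₁ x - conv J w₂ x|) ^ p) ^ (1/p)
        ≤ (ENNReal.ofReal K *
            ∫⁻ x, ENNReal.ofReal (ρ x) * (ENNReal.ofReal |w₁ x - w₂ x|) ^ p) ^ (1/p) :=
          ENNReal.rpow_le_rpow (lint_bound p hp ρ hρm hρnn K hK hKρ J hJnn hJm hJsupp hJint
            w₁ w₂ hw₁.aemeasurable hw₂.aemeasurable) (by positivity)
      _ = ENNReal.ofReal (K ^ (1/p)) *
            (∫⁻ x, ENNReal.ofReal (ρ x) * (ENNReal.ofReal |w₁ x - w₂ x|) ^ p) ^ (1/p) := by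
          rw [ENNReal.mul_rpow_of_nonneg _ _ (by positivity : (0:ℝ) ≤ 1/p),
            ENNReal.ofReal_rpow_of_pos hK]
  have eabs : ∀ (f : Euc N → ℝ), eLpNorm (fun x => |f x|) pE μ = eLpNorm f pE μ := by
    intro f
    simpa only [Real.norm_eq_abs] using eLpNorm_norm (μ := μ) (p := pE) f
  have esmul : ∀ (c : ℝ) (f : Euc N → ℝ), 0 ≤ c →
      eLpNorm (fun x => c * f x) pE μ = ENNReal.ofReal c * eLpNorm f pE μ := by
    intro c f hc
    have h1 : (fun x => c * f x) = c • f := rfl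
    rw [h1, eLpNorm_const_smul, Real.enorm_eq_ofReal hc]
  -- single convolution bound (v = 0)
  have bD1 : ∀ (w : Euc N → ℝ), AEStronglyMeasurable w volume →
      eLpNorm (conv J w) pE μ ≤ ENNReal.ofReal (K ^ (1/p)) * eLpNorm w pE μ := by
    intro w hw
    have h0 : conv J (fun _ => (0:ℝ)) = fun _ => (0:ℝ) := by
      funext x; simp [conv]
    have := bD w (fun _ => 0) hw aestronglyMeasurable_const
    simpa only [h0, sub_zero] using this
  -- membership of F w for w ∈ WLp
  have memF : ∀ (w : Euc N → ℝ), MemWLp p ρ w →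
      MemWLp p ρ (fun x => -w x + g (β * conv J w x + β * h t (w x))) := by
    intro w hwM
    have hw := hwM.1
    have hwfin : eLpNorm w pE μ < ∞ := by
      rw [ewd w hw]
      exact ENNReal.rpow_lt_top_of_nonneg (by positivity)
        (((memWLp_iff p hp ρ hρc hρnn w hw).1 hwM).ne)
    set Fw := fun x => -w x + g (β * conv J w x + β * h t (w x)) with hFw
    have hFwm : AEStronglyMeasurable Fw volume := hFm w hw
    have hcw : AEStronglyMeasurable (conv J w) volume := conv_aesm J hJm w hw.aemeasurable
    -- pointwise bound
    have hpt : ∀ x, ‖Fw x‖ ≤ |w x| + (ℓg * β * |conv J w x| + ℓg * β * ℓh * |w x|) := by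
      intro x
      rw [Real.norm_eq_abs]
      have e1 : |Fw x| ≤ |w x| + |g (β * conv J w x + β * h t (w x))| := by
        rw [hFw]
        calc |(-w x + g (β * conv J w x + β * h t (w x)))|
            ≤ |(-w x)| + |g (β * conv J w x + β * h t (w x))| := abs_add_le _ _
          _ = |w x| + |g (β * conv J w x + β * h t (w x))| := by rw [abs_neg]
      have e2 : |g (β * conv J w x + β * h t (w x))| ≤
          ℓg * (β * |conv J w x| + β * (ℓh * |w x|)) := by
        have e3 : |g (β * conv J w x + β * h t (w x))| =
            |g (β * conv J w x + β * h t (w x)) - g 0| := by rw [hg0, sub_zero]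
        rw [e3]
        refine (hgLip _ 0).trans ?_
        refine mul_le_mul_of_nonneg_left ?_ hℓg
        rw [sub_zero]
        calc |β * conv J w x + β * h t (w x)|
            ≤ |β * conv J w x| + |β * h t (w x)| := abs_add_le _ _
          _ = β * |conv J w x| + β * |h t (w x)| := by
              rw [abs_mul, abs_mul, abs_of_pos hβ]
          _ ≤ β * |conv J w x| + β * (ℓh * |w x|) := by
              refine add_le_add_right (mul_le_mul_of_nonneg_left ?_ hβ.le) _
              have e4 : |h t (w x)| = |h t (w x) - h t 0| := by rw [hh0 t, sub_zero]
              rw [e4]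
              simpa using hhLip t (w x) 0
      calc |Fw x| ≤ |w x| + |g (β * conv J w x + β * h t (w x))| := e1
        _ ≤ |w x| + ℓg * (β * |conv J w x| + β * (ℓh * |w x|)) := add_le_add_right e2 _
        _ = |w x| + (ℓg * β * |conv J w x| + ℓg * β * ℓh * |w x|) := by ring
    have hFfin : eLpNorm Fw pE μ < ∞ := by
      have hb : eLpNorm Fw pE μ ≤
          eLpNorm (fun x => |w x|) pE μ +
            (eLpNorm (fun x => ℓg * β * |conv J w x|) pE μ +
              eLpNorm (fun x => ℓg * β * ℓh * |w x|) pE μ) := by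
        refine (eLpNorm_mono_real hpt).trans ?_
        refine (eLpNorm_add_le ?_ ?_ hpE1).trans ?_
        · exact ((continuous_abs.comp_aestronglyMeasurable hw).mono_ac hAC)
        · exact (((aestronglyMeasurable_const.mul
            (continuous_abs.comp_aestronglyMeasurable hcw)).add
            (aestronglyMeasurable_const.mul
              (continuous_abs.comp_aestronglyMeasurable hw))).mono_ac hAC)
        refine add_le_add_right ?_ _
        refine eLpNorm_add_le ?_ ?_ hpE1
        · exact ((aestronglyMeasurable_const.mul
            (continuous_abs.comp_aestronglyMeasurable hcw)).mono_ac hAC)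
        · exact ((aestronglyMeasurable_const.mul
            (continuous_abs.comp_aestronglyMeasurable hw)).mono_ac hAC)
      rw [eabs w, esmul _ _ (by positivity), esmul _ _ (by positivity), eabs, eabs w] at hb
      refine lt_of_le_of_lt hb ?_
      have hcwb : eLpNorm (conv J w) pE μ < ∞ :=
        lt_of_le_of_lt (bD1 w hw) (ENNReal.mul_lt_top ENNReal.ofReal_lt_top hwfin)
      exact ENNReal.add_lt_top.2 ⟨hwfin, ENNReal.add_lt_top.2
        ⟨ENNReal.mul_lt_top ENNReal.ofReal_lt_top hcwb,
         ENNReal.mul_lt_top ENNReal.ofReal_lt_top hwfin⟩⟩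
    refine (memWLp_iff p hp ρ hρc hρnn Fw hFwm).2 ?_
    have hip : (∫⁻ x, ENNReal.ofReal (ρ x) * (ENNReal.ofReal |Fw x|) ^ p) =
        (eLpNorm Fw pE μ) ^ p := by
      rw [ewd Fw hFwm, ← ENNReal.rpow_mul, one_div_mul_cancel hp0.ne', ENNReal.rpow_one]
    rw [hip]
    exact ENNReal.rpow_lt_top_of_nonneg hp0.le hFfin.ne
  refine ⟨memF u huM, ?_⟩
  -- the Lipschitz estimate
  set Fu := fun x => -u x + g (β * conv J u x + β * h t (u x)) with hFuDef
  set Fv := fun x => -v x + g (β * conv J v x + β * h t (v x)) with hFvDef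
  set D := fun x => conv J u x - conv J v x with hD
  have hDm : AEStronglyMeasurable D volume := hcu.sub hcv
  have hpt : ∀ x, ‖Fu x - Fv x‖ ≤
      |u x - v x| + (ℓg * β * |D x| + ℓg * β * ℓh * |u x - v x|) := by
    intro x
    rw [Real.norm_eq_abs]
    have e1 : Fu x - Fv x = (v x - u x) +
        (g (β * conv J u x + β * h t (u x)) - g (β * conv J v x + β * h t (v x))) := by
      rw [hFuDef, hFvDef]; ring
    have e2 : |g (β * conv J u x + β * h t (u x)) - g (β * conv J v x + β * h t (v x))| ≤
        ℓg * (β * |D x| + β * (ℓh * |u x - v x|)) := by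
      refine (hgLip _ _).trans ?_
      refine mul_le_mul_of_nonneg_left ?_ hℓg
      have e3 : β * conv J u x + β * h t (u x) - (β * conv J v x + β * h t (v x)) =
          β * D x + β * (h t (u x) - h t (v x)) := by rw [hD]; ring
      rw [e3]
      calc |β * D x + β * (h t (u x) - h t (v x))|
          ≤ |β * D x| + |β * (h t (u x) - h t (v x))| := abs_add_le _ _
        _ = β * |D x| + β * |h t (u x) - h t (v x)| := by
            rw [abs_mul, abs_mul, abs_of_pos hβ]
        _ ≤ β * |D x| + β * (ℓh * |u x - v x|) :=
            add_le_add_right (mul_le_mul_of_nonneg_left (hhLip t _ _) hβ.le) _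
    calc |Fu x - Fv x| ≤ |v x - u x| +
        |g (β * conv J u x + β * h t (u x)) - g (β * conv J v x + β * h t (v x))| := by
          rw [e1]; exact abs_add_le _ _
      _ ≤ |u x - v x| + ℓg * (β * |D x| + β * (ℓh * |u x - v x|)) := by
          rw [abs_sub_comm (v x) (u x)]; exact add_le_add_right e2 _
      _ = |u x - v x| + (ℓg * β * |D x| + ℓg * β * ℓh * |u x - v x|) := by ring
  set S := eLpNorm (fun x => u x - v x) pE μ with hS
  have hSfin : S < ∞ := by
    refine lt_of_le_of_lt (eLpNorm_sub_le (hu.mono_ac hAC) (hv.mono_ac hAC) hpE1) ?_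
    exact ENNReal.add_lt_top.2 ⟨hufin, hvfin⟩
  have hmain : eLpNorm (fun x => Fu x - Fv x) pE μ ≤
      ENNReal.ofReal (1 + ℓg * β * K ^ (1/p) + ℓg * β * ℓh) * S := by
    have step : eLpNorm (fun x => Fu x - Fv x) pE μ ≤
        S + (ENNReal.ofReal (ℓg * β) * (ENNReal.ofReal (K ^ (1/p)) * S) +
          ENNReal.ofReal (ℓg * β * ℓh) * S) := by
      refine (eLpNorm_mono_real hpt).trans ?_
      refine ((eLpNorm_add_le ?_ ?_ hpE1).trans ?_)
      · exact ((continuous_abs.comp_aestronglyMeasurable (hu.sub hv)).mono_ac hAC)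
      · exact (((aestronglyMeasurable_const.mul
          (continuous_abs.comp_aestronglyMeasurable hDm)).add
          (aestronglyMeasurable_const.mul
            (continuous_abs.comp_aestronglyMeasurable (hu.sub hv)))).mono_ac hAC)
      have t2 : eLpNorm (fun x => ℓg * β * |D x| + ℓg * β * ℓh * |u x - v x|) pE μ ≤
          ENNReal.ofReal (ℓg * β) * (ENNReal.ofReal (K ^ (1/p)) * S) +
            ENNReal.ofReal (ℓg * β * ℓh) * S := by
        refine (eLpNorm_add_le ?_ ?_ hpE1).trans ?_
        · exact ((aestronglyMeasurable_const.mul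
            (continuous_abs.comp_aestronglyMeasurable hDm)).mono_ac hAC)
        · exact ((aestronglyMeasurable_const.mul
            (continuous_abs.comp_aestronglyMeasurable (hu.sub hv))).mono_ac hAC)
        rw [esmul _ _ (by positivity), esmul _ _ (by positivity), eabs, eabs]
        refine add_le_add ?_ le_rfl
        exact mul_le_mul_right (bD u v hu hv) _
      have t1 : eLpNorm (fun x => |u x - v x|) pE μ = S := eabs _
      rw [t1]
      exact add_le_add_right t2 _
    refine step.trans ?_
    have hC : ENNReal.ofReal (1 + ℓg * β * K ^ (1/p) + ℓg * β * ℓh) =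
        1 + ENNReal.ofReal (ℓg * β) * ENNReal.ofReal (K ^ (1/p)) +
          ENNReal.ofReal (ℓg * β * ℓh) := by
      rw [ENNReal.ofReal_add (by positivity) (by positivity),
        ENNReal.ofReal_add (by positivity) (by positivity),
        ENNReal.ofReal_one, ENNReal.ofReal_mul (mul_nonneg hℓg hβ.le)]
    rw [hC]
    exact le_of_eq (by ring)
  -- convert to wnorm
  show wnorm p ρ (fun x => Fu x - Fv x) ≤
    (1 + ℓg * β * K ^ (1 / p) + ℓg * β * ℓh) * wnorm p ρ (fun x => u x - v x)
  have e_w1 : wnorm p ρ (fun x => Fu x - Fv x) =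
      (eLpNorm (fun x => Fu x - Fv x) pE μ).toReal := by
    rw [wnorm_eq p hp ρ hρc hρnn (fun x => Fu x - Fv x) (hFu.sub hFv),
      ← ewd (fun x => Fu x - Fv x) (hFu.sub hFv)]
  have e_w2 : wnorm p ρ (fun x => u x - v x) = S.toReal := by
    rw [wnorm_eq p hp ρ hρc hρnn (fun x => u x - v x) (hu.sub hv),
      ← ewd (fun x => u x - v x) (hu.sub hv)]
  rw [e_w1, e_w2]
  have hne : ENNReal.ofReal (1 + ℓg * β * K ^ (1/p) + ℓg * β * ℓh) * S ≠ ∞ :=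
    ENNReal.mul_ne_top ENNReal.ofReal_ne_top hSfin.ne
  calc (eLpNorm (fun x => Fu x - Fv x) pE μ).toReal
      ≤ (ENNReal.ofReal (1 + ℓg * β * K ^ (1/p) + ℓg * β * ℓh) * S).toReal :=
        ENNReal.toReal_mono hne hmain
    _ = (1 + ℓg * β * K ^ (1/p) + ℓg * β * ℓh) * S.toReal := by
        rw [ENNReal.toReal_mul, ENNReal.toReal_ofReal (by positivity)]
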